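/- Let p ≥ 1 and let Γ be a family of rectifiable curves in ℝⁿ with p-modulus zero. Then for each rectifiable path γ: [0, L] → ℝⁿ parametrized by arclength, the set of x ∈ ℝⁿ such that the translated path γ + x belongs to Γ has Lebesgue n-measure zero. -/

import Mathlib

open MeasureTheory Set
open scoped ENNReal

/-- A rectifiable curve in `ℝⁿ`, given by its arclength parametrization on `[0, len]`. -/
structure RectCurve (n : ℕ) where
  len : ℝ
  len_nonneg : 0 ≤ len
  toFun : ℝ → EuclideanSpace ℝ (Fin n)
  arclength : ∀ t ∈ Set.Icc 0 len, eVariationOn toFun (Set.Icc 0 t) = ENNReal.ofReal t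

/-- The line integral `∫_γ ρ ds` of a Borel function over a rectifiable curve
(via its arclength parametrization). -/
noncomputable def lineIntegral {n : ℕ} (ρ : EuclideanSpace ℝ (Fin n) → ℝ≥0∞)
    (γ : RectCurve n) : ℝ≥0∞ :=
  ∫⁻ t in Set.Icc 0 γ.len, ρ (γ.toFun t)

/-- A Borel function `ρ ≥ 0` is admissible for a curve family `Γ` if `∫_γ ρ ds ≥ 1`
for every `γ ∈ Γ`. -/
def Admissible {n : ℕ} (ρ : EuclideanSpace ℝ (Fin n) → ℝ≥0∞) (Γ : Set (RectCurve n)) : Prop :=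
  Measurable ρ ∧ ∀ γ ∈ Γ, 1 ≤ lineIntegral ρ γ

/-- The `p`-modulus of a curve family: `inf ∫ ρᵖ` over admissible `ρ`. -/
noncomputable def modulus {n : ℕ} (p : ℝ) (Γ : Set (RectCurve n)) : ℝ≥0∞ :=
  ⨅ (ρ : EuclideanSpace ℝ (Fin n) → ℝ≥0∞) (_ : Admissible ρ Γ), ∫⁻ x, ρ x ^ p

theorem eVariationOn_add_const {n : ℕ} (f : ℝ → EuclideanSpace ℝ (Fin n))
    (x : EuclideanSpace ℝ (Fin n)) (s : Set ℝ) :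
    eVariationOn (fun t => f t + x) s = eVariationOn f s := by
  simp only [eVariationOn, edist_add_right]

/-- The translate `γ + x` of a rectifiable curve. -/
noncomputable def RectCurve.translate {n : ℕ} (γ : RectCurve n)
    (x : EuclideanSpace ℝ (Fin n)) : RectCurve n :=
  ⟨γ.len, γ.len_nonneg, fun t => γ.toFun t + x, fun t ht => by
    rw [eVariationOn_add_const]; exact γ.arclength t ht⟩


section helpers

lemma pw_bound {δ : ℝ≥0∞} (hδ0 : δ ≠ 0) (hδt : δ ≠ ⊤) {p : ℝ} (hp : 1 ≤ p) (a : ℝ≥0∞) :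
    a ≤ δ + a ^ p * δ ^ (1 - p) := by
  rcases le_total a δ with h | h
  · exact h.trans le_self_add
  · refine le_add_left ?_
    have ha0 : a ≠ 0 := fun h0 => hδ0 (le_antisymm (h0 ▸ h) (zero_le))
    rcases eq_or_ne a ⊤ with rfl | hat
    · have h1 : (⊤ : ℝ≥0∞) ^ p = ⊤ := ENNReal.top_rpow_of_pos (by linarith)
      have h2 : δ ^ (1 - p) ≠ 0 := by
        simp [ENNReal.rpow_eq_zero_iff, hδ0, hδt]
      rw [h1, ENNReal.top_mul h2]
    · calc a = a ^ p * a ^ (1 - p) := by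
            rw [← ENNReal.rpow_add _ _ ha0 hat]; simp
        _ ≤ a ^ p * δ ^ (1 - p) := by
            refine mul_le_mul_right ?_ _
            rw [show (1 - p : ℝ) = -(p - 1) by ring, ENNReal.rpow_neg, ENNReal.rpow_neg]
            exact ENNReal.inv_le_inv.mpr (ENNReal.rpow_le_rpow h (by linarith))

lemma rectCurve_lipschitz {n : ℕ} (γ : RectCurve n) :
    LipschitzOnWith 1 γ.toFun (Icc 0 γ.len) := by
  have key : ∀ s ∈ Icc (0:ℝ) γ.len, ∀ t ∈ Icc (0:ℝ) γ.len, s ≤ t →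
      edist (γ.toFun s) (γ.toFun t) ≤ ENNReal.ofReal (t - s) := by
    intro s hs t ht hst
    have hadd := eVariationOn.Icc_add_Icc γ.toFun (s := univ) hs.1 hst (mem_univ s)
    simp only [univ_inter] at hadd
    rw [γ.arclength s hs, γ.arclength t ht] at hadd
    have hle : ENNReal.ofReal s + edist (γ.toFun s) (γ.toFun t) ≤ ENNReal.ofReal t := by
      rw [← hadd]
      exact add_le_add (le_refl _) (eVariationOn.edist_le γ.toFun (left_mem_Icc.mpr hst)
        (right_mem_Icc.mpr hst))
    have := ENNReal.le_sub_of_add_le_left ENNReal.ofReal_ne_top hle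
    rwa [← ENNReal.ofReal_sub _ hs.1] at this
  intro x hx y hy
  rcases le_total x y with h | h
  · calc edist (γ.toFun x) (γ.toFun y) ≤ ENNReal.ofReal (y - x) := key x hx y hy h
      _ ≤ 1 * edist x y := by
          rw [one_mul, edist_dist, Real.dist_eq]
          exact ENNReal.ofReal_le_ofReal (by rw [abs_sub_comm]; exact le_abs_self _)
  · rw [edist_comm]
    calc edist (γ.toFun y) (γ.toFun x) ≤ ENNReal.ofReal (x - y) := key y hy x hx h
      _ ≤ 1 * edist x y := by
          rw [one_mul, edist_dist, Real.dist_eq]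
          exact ENNReal.ofReal_le_ofReal (le_abs_self _)

end helpers

/-- If `Γ` is a family of rectifiable curves of `p`-modulus zero, then for
each rectifiable path `γ`, the set of `x ∈ ℝⁿ` with `γ + x ∈ Γ` has Lebesgue measure zero. -/
theorem stmt_5 {n : ℕ} (p : ℝ) (hp : 1 ≤ p) (Γ : Set (RectCurve n))
    (hΓ : modulus p Γ = 0) (γ : RectCurve n) :
    volume {x : EuclideanSpace ℝ (Fin n) | γ.translate x ∈ Γ} = 0 := by
  classical
  set S := {x : EuclideanSpace ℝ (Fin n) | γ.translate x ∈ Γ} with hSdef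
  set L := γ.len with hL
  have hL0 : (0:ℝ) ≤ L := γ.len_nonneg
  -- a continuous extension of γ.toFun agreeing on [0, L]
  set c : ℝ → ℝ := fun t => min (max t 0) L with hc
  have hc_mem : ∀ t, c t ∈ Icc (0:ℝ) L := fun t =>
    ⟨le_min (le_max_right _ _) hL0, min_le_right _ _⟩
  have hc_cont : Continuous c := (continuous_id.max continuous_const).min continuous_const
  set g : ℝ → EuclideanSpace ℝ (Fin n) := fun t => γ.toFun (c t) with hg
  have hg_cont : Continuous g :=
    (rectCurve_lipschitz γ).continuousOn.comp_continuous hc_cont hc_mem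
  have hg_eq : ∀ t ∈ Icc (0:ℝ) L, g t = γ.toFun t := by
    intro t ht
    simp only [hg, hc, max_eq_left ht.1, min_eq_left ht.2]
  -- extraction of admissible functions with small p-energy
  have hextract : ∀ ε : ℝ≥0∞, 0 < ε → ∃ ρ : EuclideanSpace ℝ (Fin n) → ℝ≥0∞,
      Admissible ρ Γ ∧ ∫⁻ x, ρ x ^ p < ε := by
    intro ε hε
    have : modulus p Γ < ε := hΓ ▸ hε
    rw [modulus, iInf_lt_iff] at this
    obtain ⟨ρ, hρ⟩ := this
    rw [iInf_lt_iff] at hρ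
    obtain ⟨hadm, hρ⟩ := hρ
    exact ⟨ρ, hadm, hρ⟩
  -- Main estimate on a ball
  have main : ∀ r : ℝ, ∀ δ : ℝ≥0∞, δ ≠ 0 → δ ≠ ⊤ →
      ∀ ρ : EuclideanSpace ℝ (Fin n) → ℝ≥0∞, Admissible ρ Γ →
      volume (S ∩ Metric.closedBall 0 r) ≤
        (δ * volume (Metric.closedBall (0 : EuclideanSpace ℝ (Fin n)) r)
          + (∫⁻ y, ρ y ^ p) * δ ^ (1 - p)) * ENNReal.ofReal L := by
    intro r δ hδ0 hδt ρ ⟨hρm, hρadm⟩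
    set B := Metric.closedBall (0 : EuclideanSpace ℝ (Fin n)) r with hB
    set f : EuclideanSpace ℝ (Fin n) → ℝ≥0∞ := fun x => ∫⁻ t in Icc 0 L, ρ (g t + x) with hf
    have huncurry : Measurable (fun q : EuclideanSpace ℝ (Fin n) × ℝ => ρ (g q.2 + q.1)) :=
      hρm.comp ((hg_cont.measurable.comp measurable_snd).add measurable_fst)
    have hfm : Measurable f := huncurry.lintegral_prod_right'
    have h1 : ∀ x ∈ S, 1 ≤ f x := by
      intro x hx
      have hadm := hρadm _ hx
      have : lineIntegral ρ (γ.translate x) = f x := by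
        refine setLIntegral_congr_fun measurableSet_Icc ?_
        intro t ht
        show ρ (γ.toFun t + x) = ρ (g t + x)
        rw [hg_eq t ht]
      rwa [this] at hadm
    have cheb : volume (S ∩ B) ≤ ∫⁻ x in B, f x := by
      calc volume (S ∩ B) ≤ (volume.restrict B) {x | 1 ≤ f x} := by
            rw [Measure.restrict_apply' (measurableSet_closedBall)]
            exact measure_mono fun x ⟨hxS, hxB⟩ => ⟨h1 x hxS, hxB⟩
        _ ≤ ∫⁻ x in B, f x := by
            simpa using mul_meas_ge_le_lintegral₀ (hfm.aemeasurable) 1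
    have swap : ∫⁻ x in B, f x = ∫⁻ t in Icc (0:ℝ) L, ∫⁻ x in B, ρ (g t + x) := by
      exact lintegral_lintegral_swap (huncurry.aemeasurable)
    set C : ℝ≥0∞ := δ * volume B + (∫⁻ y, ρ y ^ p) * δ ^ (1 - p) with hC
    have inner : ∀ t : ℝ, ∫⁻ x in B, ρ (g t + x) ≤ C := by
      intro t
      calc ∫⁻ x in B, ρ (g t + x)
          ≤ ∫⁻ x in B, (δ + ρ (g t + x) ^ p * δ ^ (1 - p)) :=
            lintegral_mono fun x => pw_bound hδ0 hδt hp _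
        _ = δ * volume B + (∫⁻ x in B, ρ (g t + x) ^ p) * δ ^ (1 - p) := by
            rw [lintegral_add_left measurable_const, setLIntegral_const,
              lintegral_mul_const' _ _ (by simp [ENNReal.rpow_eq_top_iff, hδ0, hδt])]
        _ ≤ δ * volume B + (∫⁻ x, ρ (g t + x) ^ p) * δ ^ (1 - p) := by
            gcongr
            exact Measure.restrict_le_self
        _ = C := by
            rw [hC, lintegral_add_left_eq_self (fun y => ρ y ^ p) (g t)]
    calc volume (S ∩ B) ≤ ∫⁻ t in Icc (0:ℝ) L, ∫⁻ x in B, ρ (g t + x) := cheb.trans swap.le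
      _ ≤ ∫⁻ _ in Icc (0:ℝ) L, C := lintegral_mono fun t => inner t
      _ = C * volume (Icc (0:ℝ) L) := setLIntegral_const _ _
      _ = C * ENNReal.ofReal L := by rw [Real.volume_Icc, sub_zero]
  -- Step A : kill the energy term
  have stepA : ∀ r : ℝ, ∀ δ : ℝ≥0∞, δ ≠ 0 → δ ≠ ⊤ →
      volume (S ∩ Metric.closedBall 0 r) ≤
        δ * volume (Metric.closedBall (0 : EuclideanSpace ℝ (Fin n)) r) * ENNReal.ofReal L := by
    intro r δ hδ0 hδt
    refine ENNReal.le_of_forall_pos_le_add fun η hη _ => ?_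
    set K : ℝ≥0∞ := δ ^ (1 - p) * ENNReal.ofReal L with hK
    have hKt : K ≠ ⊤ := by
      simp [hK, ENNReal.mul_eq_top, ENNReal.rpow_eq_top_iff, hδ0, hδt]
    have hK1t : K + 1 ≠ ⊤ := by simp [hKt]
    have hεpos : (0:ℝ≥0∞) < (η : ℝ≥0∞) / (K + 1) :=
      ENNReal.div_pos (by exact_mod_cast hη.ne') hK1t
    obtain ⟨ρ, hadm, hsmall⟩ := hextract _ hεpos
    have := main r δ hδ0 hδt ρ hadm
    refine this.trans ?_
    rw [add_mul]
    refine add_le_add ?_ ?_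
    · rw [mul_assoc]
    · have h2 : (∫⁻ y, ρ y ^ p) * δ ^ (1 - p) * ENNReal.ofReal L
          = (∫⁻ y, ρ y ^ p) * K := by rw [hK, mul_assoc]
      rw [h2]
      calc (∫⁻ y, ρ y ^ p) * K = K * (∫⁻ y, ρ y ^ p) := mul_comm _ _
        _ ≤ (K + 1) * ((η : ℝ≥0∞) / (K + 1)) :=
            mul_le_mul le_self_add hsmall.le (zero_le) (zero_le)
        _ ≤ (η : ℝ≥0∞) := ENNReal.mul_div_le
  -- Step B : each ball piece is null
  have stepB : ∀ r : ℝ, volume (S ∩ Metric.closedBall 0 r) = 0 := by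
    intro r
    refine le_antisymm ?_ (zero_le)
    refine ENNReal.le_of_forall_pos_le_add fun η hη _ => ?_
    rw [zero_add]
    set D : ℝ≥0∞ := volume (Metric.closedBall (0 : EuclideanSpace ℝ (Fin n)) r)
      * ENNReal.ofReal L with hD
    have hDt : D ≠ ⊤ :=
      ENNReal.mul_ne_top (measure_closedBall_lt_top).ne ENNReal.ofReal_ne_top
    have hD1t : D + 1 ≠ ⊤ := by simp [hDt]
    have hD10 : D + 1 ≠ 0 := by simp
    set δ : ℝ≥0∞ := (η : ℝ≥0∞) / (D + 1) with hδ
    have hδ0 : δ ≠ 0 := (ENNReal.div_pos (by exact_mod_cast hη.ne') hD1t).ne'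
    have hδt : δ ≠ ⊤ := (ENNReal.div_lt_top ENNReal.coe_ne_top hD10).ne
    calc volume (S ∩ Metric.closedBall 0 r)
        ≤ δ * volume (Metric.closedBall (0 : EuclideanSpace ℝ (Fin n)) r)
            * ENNReal.ofReal L := stepA r δ hδ0 hδt
      _ = δ * D := by rw [hD, mul_assoc]
      _ = D * δ := mul_comm _ _
      _ ≤ (D + 1) * δ := mul_le_mul_left le_self_add _
      _ ≤ (η : ℝ≥0∞) := ENNReal.mul_div_le
  -- conclusion : cover by countably many balls
  have hcover : S ⊆ ⋃ k : ℕ, S ∩ Metric.closedBall 0 (k : ℝ) := by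
    intro x hx
    obtain ⟨k, hk⟩ := exists_nat_ge ‖x‖
    exact mem_iUnion.mpr ⟨k, hx, by simpa [Metric.mem_closedBall, dist_zero_right] using hk⟩
  refine le_antisymm ?_ (zero_le)
  calc volume S ≤ volume (⋃ k : ℕ, S ∩ Metric.closedBall 0 (k : ℝ)) := measure_mono hcover
    _ ≤ ∑' k : ℕ, volume (S ∩ Metric.closedBall 0 (k : ℝ)) := measure_iUnion_le _
    _ = 0 := by simp [stepB]
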